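/- Assume either (a) f_b has at most one root, or (b) f_b has two distinct roots x_{b1} < x_{b2}, there exists ã* ∈ (x_{b1}, x_{b2}) with F(ã*)·e^{ã*} = F'(ã*)·(e^{ã*} + c_b), and (e^{ã*} + c_b)/F(ã*) ≥ (e^{b*} − c_s)/F(b*). Then for all x < b*, (e^x + c_b)/F(x) ≥ (e^{b*} − c_s)/F(b*). Moreover, in case (a) the function x ↦ (e^x + c_b)/F(x) is strictly decreasing on ℝ. -/

import Mathlib

open Real MeasureTheory Set Filter

open Topology
open scoped NNReal ENNReal

noncomputable def stmt17J (p y : ℝ) : ℝ :=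
  ∫ u in Ioi (0:ℝ), u ^ p * Real.exp (y * u - u ^ 2 / 2)

lemma stmt17J_meas (p y : ℝ) :
    AEStronglyMeasurable (fun u : ℝ => u ^ p * Real.exp (y * u - u ^ 2 / 2))
      (volume.restrict (Ioi 0)) := by
  apply ContinuousOn.aestronglyMeasurable _ measurableSet_Ioi
  intro u hu
  exact ((continuousAt_id.rpow_const (Or.inl (ne_of_gt hu))).mul
    (Real.continuous_exp.continuousAt.comp (by fun_prop))).continuousWithinAt

lemma stmt17J_int {p : ℝ} (hp : -1 < p) (y : ℝ) :
    IntegrableOn (fun u : ℝ => u ^ p * Real.exp (y * u - u ^ 2 / 2)) (Ioi 0) := by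
  have hbase : IntegrableOn (fun u : ℝ => u ^ p * Real.exp (-(1/4) * u ^ (2:ℝ))) (Ioi 0) :=
    integrableOn_rpow_mul_exp_neg_mul_rpow hp two_pos (by norm_num)
  have : IntegrableOn (fun u : ℝ => Real.exp (y^2) * (u ^ p * Real.exp (-(1/4) * u ^ (2:ℝ)))) (Ioi 0) :=
    hbase.const_mul _
  apply this.mono' (stmt17J_meas p y)
  filter_upwards [ae_restrict_mem measurableSet_Ioi] with u hu
  have hu0 : (0:ℝ) < u := hu
  rw [Real.norm_eq_abs, abs_mul, abs_of_nonneg (Real.rpow_nonneg hu0.le p),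
    abs_of_nonneg (Real.exp_pos _).le]
  have h2 : u ^ (2:ℝ) = u ^ (2:ℕ) := by
    rw [show (2:ℝ) = ((2:ℕ):ℝ) by norm_num, Real.rpow_natCast]
  have hexp : y * u - u ^ 2 / 2 ≤ y ^ 2 + (-(1/4) * u ^ (2:ℝ)) := by
    rw [h2]; nlinarith [sq_nonneg (y - u/2), sq_nonneg u]
  calc u ^ p * Real.exp (y * u - u ^ 2 / 2)
      ≤ u ^ p * Real.exp (y ^ 2 + (-(1/4) * u ^ (2:ℝ))) := by
        exact mul_le_mul_of_nonneg_left (Real.exp_le_exp.2 hexp) (Real.rpow_nonneg hu0.le p)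
    _ = Real.exp (y ^ 2) * (u ^ p * Real.exp (-(1/4) * u ^ (2:ℝ))) := by
        rw [Real.exp_add]; ring

lemma stmt17J_pos {p : ℝ} (hp : -1 < p) (y : ℝ) : 0 < stmt17J p y := by
  rw [stmt17J]
  have hnn : 0 ≤ᵐ[volume.restrict (Ioi (0:ℝ))]
      fun u : ℝ => u ^ p * Real.exp (y * u - u ^ 2 / 2) := by
    filter_upwards [ae_restrict_mem measurableSet_Ioi] with u hu
    exact mul_nonneg (Real.rpow_nonneg (le_of_lt hu) p) (Real.exp_pos _).le
  rw [setIntegral_pos_iff_support_of_nonneg_ae hnn (stmt17J_int hp y)]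
  have hsub : Ioi (0:ℝ) ⊆ (Function.support fun u : ℝ => u ^ p * Real.exp (y * u - u ^ 2 / 2)) ∩ Ioi 0 := by
    intro u hu
    refine ⟨?_, hu⟩
    exact ne_of_gt (mul_pos (Real.rpow_pos_of_pos hu p) (Real.exp_pos _))
  calc (0:ℝ≥0∞) < volume (Ioi (0:ℝ)) := by simp
    _ ≤ _ := measure_mono hsub

lemma stmt17J_mono {p : ℝ} (hp : -1 < p) {y1 y2 : ℝ} (h : y1 ≤ y2) :
    stmt17J p y1 ≤ stmt17J p y2 := by
  refine setIntegral_mono_on (stmt17J_int hp y1) (stmt17J_int hp y2) measurableSet_Ioi ?_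
  intro u hu
  have hu0 : (0:ℝ) < u := hu
  exact mul_le_mul_of_nonneg_left (Real.exp_le_exp.2 (by nlinarith)) (Real.rpow_nonneg hu0.le p)

lemma stmt17J_hasDeriv {p : ℝ} (hp : -1 < p) (y₀ : ℝ) :
    HasDerivAt (fun y => stmt17J p y) (stmt17J (p+1) y₀) y₀ := by
  have hp1 : (-1:ℝ) < p + 1 := by linarith
  have key := hasDerivAt_integral_of_dominated_loc_of_lip
    (F := fun (y : ℝ) (u : ℝ) => u ^ p * Real.exp (y * u - u ^ 2 / 2))
    (F' := fun u : ℝ => u ^ (p+1) * Real.exp (y₀ * u - u ^ 2 / 2))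
    (μ := volume.restrict (Ioi (0:ℝ))) (x₀ := y₀)
    (bound := fun u : ℝ => u ^ (p+1) * Real.exp ((|y₀| + 1) * u - u ^ 2 / 2))
    (s := Metric.ball y₀ 1) (Metric.ball_mem_nhds y₀ one_pos)
    (Eventually.of_forall fun y => stmt17J_meas p y)
    (stmt17J_int hp y₀)
    (stmt17J_meas (p+1) y₀)
    ?_ (stmt17J_int hp1 (|y₀| + 1)) ?_
  · exact key.2
  · -- Lipschitz bound
    filter_upwards [ae_restrict_mem measurableSet_Ioi] with u hu
    have hu0 : (0:ℝ) < u := hu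
    apply (convex_ball y₀ 1).lipschitzOnWith_of_nnnorm_hasDerivWithin_le
      (f' := fun y => u ^ (p+1) * Real.exp (y * u - u ^ 2 / 2))
    · intro y _
      have h1 : HasDerivAt (fun y : ℝ => y * u - u ^ 2 / 2) u y := by
        simpa using ((hasDerivAt_id y).mul_const u).sub_const (u ^ 2 / 2)
      have h2 := (h1.exp.const_mul (u ^ p))
      have : u ^ p * (Real.exp (y * u - u ^ 2 / 2) * u) = u ^ (p+1) * Real.exp (y * u - u ^ 2 / 2) := by
        rw [Real.rpow_add_one (ne_of_gt hu0)]; ring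
      rw [this] at h2
      exact h2.hasDerivWithinAt
    · intro y hy
      rw [← NNReal.coe_le_coe]
      simp only [coe_nnnorm, Real.coe_nnabs, Real.norm_eq_abs]
      have hb : (0:ℝ) ≤ u ^ (p+1) * Real.exp ((|y₀| + 1) * u - u ^ 2 / 2) :=
        mul_nonneg (Real.rpow_nonneg hu0.le _) (Real.exp_pos _).le
      rw [abs_of_nonneg hb, abs_of_nonneg (mul_nonneg (Real.rpow_nonneg hu0.le _) (Real.exp_pos _).le)]
      apply mul_le_mul_of_nonneg_left _ (Real.rpow_nonneg hu0.le _)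
      apply Real.exp_le_exp.2
      have hyb : |y - y₀| < 1 := by
        have := mem_ball_iff_norm.1 hy
        rwa [Real.norm_eq_abs] at this
      have : y ≤ |y₀| + 1 := by
        have h1 := (abs_lt.1 hyb).2
        have h2 := le_abs_self y₀
        linarith
      nlinarith
  · -- differentiability a.e.
    filter_upwards [ae_restrict_mem measurableSet_Ioi] with u hu
    have hu0 : (0:ℝ) < u := hu
    have h1 : HasDerivAt (fun y : ℝ => y * u - u ^ 2 / 2) u y₀ := by
      simpa using ((hasDerivAt_id y₀).mul_const u).sub_const (u ^ 2 / 2)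
    have h2 := (h1.exp.const_mul (u ^ p))
    have : u ^ p * (Real.exp (y₀ * u - u ^ 2 / 2) * u) = u ^ (p+1) * Real.exp (y₀ * u - u ^ 2 / 2) := by
      rw [Real.rpow_add_one (ne_of_gt hu0)]; ring
    rw [this] at h2
    exact h2

lemma stmt17J_ibp {p : ℝ} (hp : 0 < p) (y : ℝ) :
    stmt17J (p+1) y = p * stmt17J (p-1) y + y * stmt17J p y := by
  have hpm : (-1:ℝ) < p - 1 := by linarith
  have hp0 : (-1:ℝ) < p := by linarith
  have hp1 : (-1:ℝ) < p + 1 := by linarith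
  have hderiv : ∀ u ∈ Ioi (0:ℝ), HasDerivAt (fun u : ℝ => u ^ p * Real.exp (y * u - u ^ 2 / 2))
      (p * (u ^ (p-1) * Real.exp (y * u - u ^ 2 / 2)) +
        (y * (u ^ p * Real.exp (y * u - u ^ 2 / 2)) - u ^ (p+1) * Real.exp (y * u - u ^ 2 / 2))) u := by
    intro u hu
    have hu0 : (0:ℝ) < u := hu
    have h1 : HasDerivAt (fun u : ℝ => u ^ p) (p * u ^ (p-1)) u :=
      Real.hasDerivAt_rpow_const (Or.inl (ne_of_gt hu0))
    have h2 : HasDerivAt (fun u : ℝ => y * u - u ^ 2 / 2) (y - u) u := by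
      have := ((hasDerivAt_id u).const_mul y).sub ((hasDerivAt_pow 2 u).div_const 2)
      exact this.congr_deriv (by ring)
    have h3 := h1.mul h2.exp
    have he : p * u ^ (p - 1) * Real.exp (y * u - u ^ 2 / 2) +
        u ^ p * (Real.exp (y * u - u ^ 2 / 2) * (y - u)) =
        p * (u ^ (p-1) * Real.exp (y * u - u ^ 2 / 2)) +
        (y * (u ^ p * Real.exp (y * u - u ^ 2 / 2)) - u ^ (p+1) * Real.exp (y * u - u ^ 2 / 2)) := by
      rw [Real.rpow_add_one (ne_of_gt hu0) p]; ring
    rw [← he]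
    exact h3
  have hB : IntegrableOn (fun u : ℝ =>
      y * (u ^ p * Real.exp (y * u - u ^ 2 / 2)) - u ^ (p+1) * Real.exp (y * u - u ^ 2 / 2))
      (Ioi (0:ℝ)) := ((stmt17J_int hp0 y).const_mul y).sub (stmt17J_int hp1 y)
  have hA : IntegrableOn (fun u : ℝ => p * (u ^ (p-1) * Real.exp (y * u - u ^ 2 / 2)))
      (Ioi (0:ℝ)) := (stmt17J_int hpm y).const_mul p
  have hint : IntegrableOn (fun u : ℝ =>
      p * (u ^ (p-1) * Real.exp (y * u - u ^ 2 / 2)) +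
        (y * (u ^ p * Real.exp (y * u - u ^ 2 / 2)) - u ^ (p+1) * Real.exp (y * u - u ^ 2 / 2)))
      (Ioi (0:ℝ)) := hA.add hB
  have hcont : ContinuousWithinAt (fun u : ℝ => u ^ p * Real.exp (y * u - u ^ 2 / 2)) (Ici (0:ℝ)) 0 := by
    apply ContinuousAt.continuousWithinAt
    have h1 : ContinuousAt (fun u : ℝ => u ^ p) 0 :=
      Real.continuousAt_rpow_const 0 p (Or.inr hp.le)
    exact h1.mul (Real.continuous_exp.continuousAt.comp (by fun_prop))
  have htend : Tendsto (fun u : ℝ => u ^ p * Real.exp (y * u - u ^ 2 / 2)) atTop (𝓝 0) := by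
    apply tendsto_of_tendsto_of_tendsto_of_le_of_le' (g := fun _ : ℝ => (0:ℝ))
      (h := fun u : ℝ => Real.exp (-u)) tendsto_const_nhds
      (Real.tendsto_exp_atBot.comp tendsto_neg_atTop_atBot)
    · filter_upwards [eventually_ge_atTop (1:ℝ)] with u hu
      exact mul_nonneg (Real.rpow_nonneg (by linarith) p) (Real.exp_pos _).le
    · filter_upwards [eventually_ge_atTop (max 1 (2*(p + y + 1)))] with u hu
      have hu1 : (1:ℝ) ≤ u := le_trans (le_max_left _ _) hu
      have hu2 : 2*(p + y + 1) ≤ u := le_trans (le_max_right _ _) hu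
      have hrp : u ^ p ≤ Real.exp (p * u) := by
        rw [show u ^ p = Real.exp (p * Real.log u) by
          rw [← Real.log_rpow (by linarith), Real.exp_log (Real.rpow_pos_of_pos (by linarith) p)]]
        apply Real.exp_le_exp.2
        have := Real.log_le_sub_one_of_pos (show (0:ℝ) < u by linarith)
        nlinarith [Real.log_nonneg hu1]
      calc u ^ p * Real.exp (y * u - u ^ 2 / 2)
          ≤ Real.exp (p * u) * Real.exp (y * u - u ^ 2 / 2) :=
            mul_le_mul_of_nonneg_right hrp (Real.exp_pos _).le
        _ = Real.exp (p * u + (y * u - u ^ 2 / 2)) := by rw [← Real.exp_add]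
        _ ≤ Real.exp (-u) := by apply Real.exp_le_exp.2; nlinarith
  have hg0 : (fun u : ℝ => u ^ p * Real.exp (y * u - u ^ 2 / 2)) 0 = 0 := by
    simp [Real.zero_rpow (ne_of_gt hp)]
  have key := integral_Ioi_of_hasDerivAt_of_tendsto hcont hderiv hint htend
  rw [show (0:ℝ) - 0 ^ p * rexp (y * 0 - 0 ^ 2 / 2) = 0 by
    rw [Real.zero_rpow (ne_of_gt hp)]; ring] at key
  have expand : (∫ u in Ioi (0:ℝ),
      (p * (u ^ (p-1) * Real.exp (y * u - u ^ 2 / 2)) +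
        (y * (u ^ p * Real.exp (y * u - u ^ 2 / 2)) - u ^ (p+1) * Real.exp (y * u - u ^ 2 / 2)))) =
      p * stmt17J (p-1) y + (y * stmt17J p y - stmt17J (p+1) y) := by
    rw [integral_add hA hB,
      integral_sub ((stmt17J_int hp0 y).const_mul y) (stmt17J_int hp1 y),
      integral_const_mul, integral_const_mul]
    rfl
  rw [expand] at key
  linarith

lemma stmt17_sign {f : ℝ → ℝ} (hc : StrictConcaveOn ℝ univ f) {x1 x2 : ℝ} (h12 : x1 < x2)
    (h1 : f x1 = 0) (h2 : f x2 = 0) :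
    (∀ t, t < x1 → f t < 0) ∧ (∀ t ∈ Ioo x1 x2, 0 < f t) ∧ (∀ t, x2 < t → f t < 0) := by
  refine ⟨?_, ?_, ?_⟩
  · intro t ht
    have hne : x2 - t ≠ 0 := ne_of_gt (by linarith)
    have ha : 0 < (x2 - x1)/(x2 - t) := by apply div_pos <;> linarith
    have hb : 0 < (x1 - t)/(x2 - t) := by apply div_pos <;> linarith
    have hab : (x2 - x1)/(x2 - t) + (x1 - t)/(x2 - t) = 1 := by
      rw [← add_div]; rw [show x2 - x1 + (x1 - t) = x2 - t by ring]; exact div_self hne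
    have hco : ((x2 - x1)/(x2 - t)) • t + ((x1 - t)/(x2 - t)) • x2 = x1 := by
      simp only [smul_eq_mul]; field_simp; ring
    have h := hc.2 (mem_univ t) (mem_univ x2) (by intro h; rw [h] at ht; linarith) ha hb hab
    rw [hco, h1, h2, smul_eq_mul, smul_eq_mul, mul_zero, add_zero] at h
    nlinarith
  · intro t ht
    obtain ⟨ht1, ht2⟩ := ht
    have hne : x2 - x1 ≠ 0 := ne_of_gt (by linarith)
    have ha : 0 < (x2 - t)/(x2 - x1) := by apply div_pos <;> linarith
    have hb : 0 < (t - x1)/(x2 - x1) := by apply div_pos <;> linarith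
    have hab : (x2 - t)/(x2 - x1) + (t - x1)/(x2 - x1) = 1 := by
      rw [← add_div]; rw [show x2 - t + (t - x1) = x2 - x1 by ring]; exact div_self hne
    have hco : ((x2 - t)/(x2 - x1)) • x1 + ((t - x1)/(x2 - x1)) • x2 = t := by
      simp only [smul_eq_mul]; field_simp; ring
    have h := hc.2 (mem_univ x1) (mem_univ x2) (ne_of_lt h12) ha hb hab
    rw [hco, h1, h2, smul_eq_mul, smul_eq_mul, mul_zero, mul_zero, add_zero] at h
    exact h
  · intro t ht
    have hne : t - x1 ≠ 0 := ne_of_gt (by linarith)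
    have ha : 0 < (t - x2)/(t - x1) := by apply div_pos <;> linarith
    have hb : 0 < (x2 - x1)/(t - x1) := by apply div_pos <;> linarith
    have hab : (t - x2)/(t - x1) + (x2 - x1)/(t - x1) = 1 := by
      rw [← add_div]; rw [show t - x2 + (x2 - x1) = t - x1 by ring]; exact div_self hne
    have hco : ((t - x2)/(t - x1)) • x1 + ((x2 - x1)/(t - x1)) • t = x2 := by
      simp only [smul_eq_mul]; field_simp; ring
    have h := hc.2 (mem_univ x1) (mem_univ t) (by intro h; rw [← h] at ht; linarith) ha hb hab
    rw [hco, h1, h2, smul_eq_mul, smul_eq_mul, mul_zero, zero_add] at h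
    nlinarith

set_option maxHeartbeats 1000000 in
/-- Under (a) f_b has at most one root, or (b) f_b has two distinct
roots x_{b1} < x_{b2} and there is ã* ∈ (x_{b1}, x_{b2}) with
F(ã*)e^{ã*} = F'(ã*)(e^{ã*} + c_b) and (e^{ã*} + c_b)/F(ã*) ≥ (e^{b*} − c_s)/F(b*):
then (e^x + c_b)/F(x) ≥ (e^{b*} − c_s)/F(b*) for all x < b*. Moreover in case (a)
the map x ↦ (e^x + c_b)/F(x) is strictly decreasing on ℝ. -/
theorem stmt17
    (μ σ θ r c_s c_b : ℝ)
    (hμ : 0 < μ) (hσ : 0 < σ) (hr : 0 < r) (hcs : 0 < c_s) (hcb : 0 < c_b)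
    (F G : ℝ → ℝ)
    (hF : ∀ x : ℝ, F x = ∫ u in Ioi (0:ℝ),
        u ^ (r / μ - 1) * Real.exp (Real.sqrt (2 * μ / σ ^ 2) * (x - θ) * u - u ^ 2 / 2))
    (hG : ∀ x : ℝ, G x = ∫ u in Ioi (0:ℝ),
        u ^ (r / μ - 1) * Real.exp (Real.sqrt (2 * μ / σ ^ 2) * (θ - x) * u - u ^ 2 / 2))
    (f_b : ℝ → ℝ)
    (hfb : ∀ x : ℝ, f_b x = (μ * θ + σ ^ 2 / 2 - r) - μ * x - r * c_b * Real.exp (-x))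
    (bstar : ℝ)
    (hb : Real.exp bstar * F bstar = (Real.exp bstar - c_s) * deriv F bstar)
    (hb_uniq : ∀ b', Real.exp b' * F b' = (Real.exp b' - c_s) * deriv F b' → b' = bstar)
    (hcase :
      (∀ x y : ℝ, f_b x = 0 → f_b y = 0 → x = y) ∨
      (∃ xb1 xb2 a : ℝ, xb1 < xb2 ∧ f_b xb1 = 0 ∧ f_b xb2 = 0 ∧ a ∈ Ioo xb1 xb2 ∧
        F a * Real.exp a = deriv F a * (Real.exp a + c_b) ∧
        (Real.exp bstar - c_s) / F bstar ≤ (Real.exp a + c_b) / F a)) :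
    (∀ x : ℝ, x < bstar →
      (Real.exp bstar - c_s) / F bstar ≤ (Real.exp x + c_b) / F x) ∧
    ((∀ x y : ℝ, f_b x = 0 → f_b y = 0 → x = y) →
      StrictAnti (fun x => (Real.exp x + c_b) / F x)) := by
  clear hG G hb_uniq
  have hσ2 : (0:ℝ) < σ^2 := by positivity
  have hqpos : (0:ℝ) < 2*μ/σ^2 := by positivity
  set γ : ℝ := Real.sqrt (2*μ/σ^2) with hγdef
  have hγpos : 0 < γ := Real.sqrt_pos.2 hqpos
  have hγsq : γ^2 = 2*μ/σ^2 := Real.sq_sqrt hqpos.le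
  set p0 : ℝ := r/μ - 1 with hp0def
  have hrμ : 0 < r/μ := div_pos hr hμ
  have hp0 : (-1:ℝ) < p0 := by rw [hp0def]; linarith
  have hp01 : (-1:ℝ) < p0+1 := by linarith
  have hp02 : (-1:ℝ) < p0+2 := by linarith
  have hp1pos : (0:ℝ) < p0+1 := by rw [hp0def]; linarith
  have hFeq : ∀ x, F x = stmt17J p0 (γ*(x-θ)) := by
    intro x; rw [hF x]; rfl
  set F1 : ℝ → ℝ := fun x => γ * stmt17J (p0+1) (γ*(x-θ)) with hF1def
  set F2 : ℝ → ℝ := fun x => γ^2 * stmt17J (p0+2) (γ*(x-θ)) with hF2def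
  have hin : ∀ x : ℝ, HasDerivAt (fun x : ℝ => γ*(x-θ)) γ x := by
    intro x
    simpa using ((hasDerivAt_id x).sub_const θ).const_mul γ
  have hFd : ∀ x, HasDerivAt F (F1 x) x := by
    intro x
    have h := (stmt17J_hasDeriv hp0 (γ*(x-θ))).comp x (hin x)
    have hFfun : F = fun x => stmt17J p0 (γ*(x-θ)) := funext hFeq
    rw [hFfun, hF1def]
    simpa [mul_comm, Function.comp_def] using h
  have hF1d : ∀ x, HasDerivAt F1 (F2 x) x := by
    intro x
    have h := ((stmt17J_hasDeriv hp01 (γ*(x-θ))).comp x (hin x)).const_mul γ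
    rw [hF1def, hF2def]
    have : γ * (stmt17J (p0+1+1) (γ*(x-θ)) * γ) = γ^2 * stmt17J (p0+2) (γ*(x-θ)) := by
      rw [show p0+1+1 = p0+2 by ring]; ring
    simpa [this] using h
  have hderivF : deriv F = F1 := funext fun x => (hFd x).deriv
  have hFpos : ∀ x, 0 < F x := by
    intro x; rw [hFeq x]; exact stmt17J_pos hp0 _
  have hF1pos : ∀ x, 0 < F1 x := by
    intro x; exact mul_pos hγpos (stmt17J_pos hp01 _)
  have hFmono : ∀ x ≤ θ, F x ≤ F θ := by
    intro x hx
    rw [hFeq x, hFeq θ]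
    exact stmt17J_mono hp0 (by nlinarith)
  have hF1mono : ∀ x ≤ θ, F1 x ≤ F1 θ := by
    intro x hx
    exact mul_le_mul_of_nonneg_left (stmt17J_mono hp01 (by nlinarith)) hγpos.le
  have hODE : ∀ x, F2 x = 2*r/σ^2 * F x + 2*μ/σ^2*(x-θ)*F1 x := by
    intro x
    have h := stmt17J_ibp (p := p0+1) hp1pos (γ*(x-θ))
    rw [show p0+1+1 = p0+2 by ring, show p0+1-1 = p0 by ring] at h
    have hc1 : γ^2 * (p0+1) = 2*r/σ^2 := by
      rw [hγsq, hp0def]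
      field_simp
      ring
    rw [hF2def, hF1def, hFeq x]
    simp only
    rw [h]
    linear_combination stmt17J p0 (γ*(x-θ)) * hc1 +
      (γ*(x-θ)) * stmt17J (p0+1) (γ*(x-θ)) * hγsq
  set W : ℝ → ℝ := fun x => Real.exp x * F x - (Real.exp x + c_b) * F1 x with hWdef
  have hWd : ∀ x, HasDerivAt W (Real.exp x * F x - (Real.exp x + c_b) * F2 x) x := by
    intro x
    have h := ((Real.hasDerivAt_exp x).mul (hFd x)).sub
      (((Real.hasDerivAt_exp x).add_const c_b).mul (hF1d x))
    rw [hWdef]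
    refine h.congr_deriv ?_
    ring
  set m : ℝ → ℝ := fun x => Real.exp (-(μ/σ^2) * (x-θ)^2) with hmdef
  have hmpos : ∀ x, 0 < m x := fun x => Real.exp_pos _
  have hmd : ∀ x, HasDerivAt m (2*μ/σ^2*(θ-x) * m x) x := by
    intro x
    have hi : HasDerivAt (fun x : ℝ => -(μ/σ^2) * (x-θ)^2) (-(μ/σ^2) * (2*(x-θ))) x := by
      have := (((hasDerivAt_id x).sub_const θ).pow 2).const_mul (-(μ/σ^2))
      simpa using this
    have h := hi.exp
    rw [hmdef]
    convert h using 1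
    simp only
    field_simp
    ring
  set M : ℝ → ℝ := fun x => m x * W x with hMdef
  have hMd : ∀ x, HasDerivAt M (2/σ^2 * m x * F x * Real.exp x * f_b x) x := by
    intro x
    have h := (hmd x).mul (hWd x)
    rw [hMdef]
    refine h.congr_deriv (Eq.symm ?_)
    simp only [hWdef]
    rw [hODE x, hfb x]
    have hex : Real.exp (-x) * Real.exp x = 1 := by
      rw [← Real.exp_add]; simp
    have hs : σ^2 * (σ⁻¹)^2 = 1 := by
      field_simp
    linear_combination (-(2*r*c_b/σ^2) * m x * F x) * hex +
      (m x * F x * Real.exp x) * hs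
  have hcoef : ∀ x, 0 < 2/σ^2 * m x * F x * Real.exp x := fun x =>
    mul_pos (mul_pos (mul_pos (by positivity) (hmpos x)) (hFpos x)) (Real.exp_pos x)
  have hMdiff : Differentiable ℝ M := fun x => (hMd x).differentiableAt
  have hderivM : deriv M = fun x => 2/σ^2 * m x * F x * Real.exp x * f_b x :=
    funext fun x => (hMd x).deriv
  -- limit of M at -infinity
  have hmlim : Tendsto m atBot (𝓝 0) := by
    have h1 : Tendsto (fun x : ℝ => x - θ) atBot atBot := by
      simpa [sub_eq_add_neg] using tendsto_atBot_add_const_right atBot (-θ) (tendsto_id (α := ℝ))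
    have h2 : Tendsto (fun x : ℝ => -(x - θ)) atBot atTop := tendsto_neg_atBot_atTop.comp h1
    have hq : Tendsto (fun x : ℝ => (x-θ)^2) atBot atTop := by
      apply tendsto_atTop_mono' atBot ?_ h2
      filter_upwards [eventually_le_atBot (θ - 1)] with x hx
      nlinarith
    have hexp : Tendsto (fun x : ℝ => -(μ/σ^2) * (x-θ)^2) atBot atBot :=
      Tendsto.const_mul_atTop_of_neg (neg_neg_iff_pos.mpr (by positivity)) hq
    exact Real.tendsto_exp_atBot.comp hexp
  have hMlim : Tendsto M atBot (𝓝 0) := by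
    set C := Real.exp θ * F θ + (Real.exp θ + c_b) * F1 θ with hCdef
    have hC : ∀ x ≤ θ, -C ≤ W x ∧ W x ≤ C := by
      intro x hx
      have hψ : (Real.exp x + c_b) * F1 x ≤ (Real.exp θ + c_b) * F1 θ :=
        mul_le_mul (by linarith [Real.exp_le_exp.2 hx]) (hF1mono x hx) (hF1pos x).le
          (by positivity)
      have hEF : Real.exp x * F x ≤ Real.exp θ * F θ :=
        mul_le_mul (Real.exp_le_exp.2 hx) (hFmono x hx) (hFpos x).le (Real.exp_pos θ).le
      have hp1 : 0 < Real.exp x * F x := mul_pos (Real.exp_pos x) (hFpos x)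
      have hp2 : 0 < (Real.exp x + c_b) * F1 x :=
        mul_pos (by positivity) (hF1pos x)
      have hp3 : 0 < Real.exp θ * F θ := mul_pos (Real.exp_pos θ) (hFpos θ)
      have hp4 : 0 < (Real.exp θ + c_b) * F1 θ := mul_pos (by positivity) (hF1pos θ)
      constructor
      · show -C ≤ Real.exp x * F x - (Real.exp x + c_b) * F1 x
        rw [hCdef]; linarith
      · show Real.exp x * F x - (Real.exp x + c_b) * F1 x ≤ C
        rw [hCdef]; linarith
    apply tendsto_of_tendsto_of_tendsto_of_le_of_le' (g := fun x => -(C * m x))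
      (h := fun x => C * m x)
    · have h := (hmlim.const_mul C).neg
      simp only [mul_zero, neg_zero] at h
      exact h
    · have h := hmlim.const_mul C
      simp only [mul_zero] at h
      exact h
    · filter_upwards [eventually_le_atBot θ] with x hx
      have h := (hC x hx).1
      show -(C * m x) ≤ m x * W x
      nlinarith [hmpos x, mul_le_mul_of_nonneg_left h (hmpos x).le]
    · filter_upwards [eventually_le_atBot θ] with x hx
      have h := (hC x hx).2
      show m x * W x ≤ C * m x
      nlinarith [hmpos x, mul_le_mul_of_nonneg_left h (hmpos x).le]
  -- derivative of the A function
  have hAd : ∀ x, HasDerivAt (fun x => (Real.exp x + c_b) / F x) (W x / F x ^ 2) x := by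
    intro x
    have h := ((Real.hasDerivAt_exp x).add_const c_b).div (hFd x) (ne_of_gt (hFpos x))
    exact h
  have hAdiff : Differentiable ℝ (fun x => (Real.exp x + c_b) / F x) :=
    fun x => (hAd x).differentiableAt
  have hderivA : deriv (fun x => (Real.exp x + c_b) / F x) = fun x => W x / F x ^ 2 :=
    funext fun x => (hAd x).deriv
  -- comparison of A and B at bstar
  have hBA : (Real.exp bstar - c_s) / F bstar ≤ (Real.exp bstar + c_b) / F bstar := by
    have h := hFpos bstar
    rw [div_le_div_iff₀ h h]
    nlinarith
  -- monotonicity helpers for A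
  have hAmono : ∀ s t : ℝ, s ≤ t → (∀ u ∈ Ioo s t, 0 ≤ W u) →
      (Real.exp s + c_b)/F s ≤ (Real.exp t + c_b)/F t := by
    intro s t hst hw
    have hm := monotoneOn_of_deriv_nonneg (convex_Icc s t)
      (hAdiff.continuous.continuousOn)
      (hAdiff.differentiableOn)
      (fun u hu => by
        rw [interior_Icc] at hu
        rw [hderivA]
        exact div_nonneg (hw u hu) (sq_nonneg _))
    exact hm (left_mem_Icc.2 hst) (right_mem_Icc.2 hst) hst
  have hAanti : ∀ s t : ℝ, s ≤ t → (∀ u ∈ Ioo s t, W u ≤ 0) →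
      (Real.exp t + c_b)/F t ≤ (Real.exp s + c_b)/F s := by
    intro s t hst hw
    have hm := antitoneOn_of_deriv_nonpos (convex_Icc s t)
      (hAdiff.continuous.continuousOn)
      (hAdiff.differentiableOn)
      (fun u hu => by
        rw [interior_Icc] at hu
        rw [hderivA]
        exact div_nonpos_of_nonpos_of_nonneg (hw u hu) (sq_nonneg _))
    exact hm (left_mem_Icc.2 hst) (right_mem_Icc.2 hst) hst
  -- main case split
  rcases hcase with hone | htwo
  · -- case (a)
    have hfb_cont : Continuous f_b := by
      have : f_b = fun x => (μ * θ + σ ^ 2 / 2 - r) - μ * x - r * c_b * Real.exp (-x) :=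
        funext hfb
      rw [this]; fun_prop
    have hfb_nonpos : ∀ x, f_b x ≤ 0 := by
      by_contra hcon
      push_neg at hcon
      obtain ⟨x0, hx0⟩ := hcon
      obtain ⟨Aq, hAq⟩ : ∃ t : ℝ, t = μ * θ + σ ^ 2 / 2 - r := ⟨_, rfl⟩
      have hfb' : ∀ x, f_b x = Aq - μ * x - r * c_b * Real.exp (-x) := by
        intro x; rw [hfb x, hAq]
      obtain ⟨tr, htr⟩ : ∃ t : ℝ, t = max x0 ((|Aq|+1)/μ) + 1 := ⟨_, rfl⟩
      have htrx : x0 < tr := by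
        have := le_max_left x0 ((|Aq|+1)/μ); linarith
      have hfr : f_b tr < 0 := by
        rw [hfb' tr]
        have h1 : (|Aq|+1)/μ ≤ tr - 1 := by
          have := le_max_right x0 ((|Aq|+1)/μ); linarith
        rw [div_le_iff₀ hμ] at h1
        have h3 := le_abs_self Aq
        have h4 := Real.exp_pos (-tr)
        nlinarith [mul_pos (mul_pos hr hcb) h4]
      obtain ⟨K, hK⟩ : ∃ t : ℝ, t = r*c_b/4 := ⟨_, rfl⟩
      have hKpos : 0 < K := by rw [hK]; positivity
      obtain ⟨s, hs⟩ : ∃ t : ℝ, t = ((|Aq| + 1)/K) + (μ/K) + |x0| + 1 := ⟨_, rfl⟩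
      have hs0 : 0 ≤ (|Aq| + 1)/K := by positivity
      have hs0' : 0 ≤ μ/K := by positivity
      have hs1 : 1 ≤ s := by rw [hs]; linarith [abs_nonneg x0]
      have htl : -s < x0 := by
        have h0 := neg_abs_le x0
        rw [hs]; linarith
      have hfl : f_b (-s) < 0 := by
        rw [hfb' (-s), neg_neg]
        have hexpge : s^2/4 ≤ Real.exp s := by
          have h5 := Real.add_one_le_exp (s/2)
          have h6 : Real.exp s = Real.exp (s/2) * Real.exp (s/2) := by
            rw [← Real.exp_add]; ring_nf
          nlinarith [Real.exp_pos (s/2),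
            mul_self_le_mul_self (by linarith : (0:ℝ) ≤ s/2+1) h5]
        have hKs : K * s = |Aq| + 1 + μ + K*(|x0| + 1) := by
          rw [hs]; field_simp; ring
        have e1 : K * s * s = (|Aq| + 1)*s + μ*s + K*(|x0| + 1)*s := by
          linear_combination s * hKs
        have e2 : (|Aq| + 1) ≤ (|Aq| + 1)*s := by nlinarith [abs_nonneg Aq]
        have e3 : 0 ≤ K*(|x0| + 1)*s := by positivity
        have h3 := le_abs_self Aq
        have e4 : r*c_b*(s^2/4) = K*s*s := by rw [hK]; ring
        have hmul : r*c_b*(s^2/4) ≤ r*c_b*Real.exp s :=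
          mul_le_mul_of_nonneg_left hexpge (by positivity)
        nlinarith
      have hivt1 : ∃ t1 ∈ Ioo (-s) x0, f_b t1 = 0 := by
        have hsub := intermediate_value_Ioo (le_of_lt htl) hfb_cont.continuousOn
        obtain ⟨t1, ht1, ht1v⟩ := hsub (show (0:ℝ) ∈ Ioo (f_b (-s)) (f_b x0) from ⟨hfl, hx0⟩)
        exact ⟨t1, ht1, ht1v⟩
      have hivt2 : ∃ t2 ∈ Ioo x0 tr, f_b t2 = 0 := by
        have hsub := intermediate_value_Ioo' (le_of_lt htrx) hfb_cont.continuousOn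
        obtain ⟨t2, ht2, ht2v⟩ := hsub (show (0:ℝ) ∈ Ioo (f_b tr) (f_b x0) from ⟨hfr, hx0⟩)
        exact ⟨t2, ht2, ht2v⟩
      obtain ⟨t1, ht1, hv1⟩ := hivt1
      obtain ⟨t2, ht2, hv2⟩ := hivt2
      have := hone t1 t2 hv1 hv2
      linarith [ht1.2, ht2.1]
    have hManti : Antitone M := by
      apply antitone_of_deriv_nonpos hMdiff
      intro x
      rw [hderivM]
      exact mul_nonpos_of_nonneg_of_nonpos (hcoef x).le (hfb_nonpos x)
    have hMle : ∀ x, M x ≤ 0 := by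
      intro x
      apply ge_of_tendsto hMlim
      filter_upwards [eventually_le_atBot x] with t ht
      exact hManti ht
    have hWle : ∀ x, W x ≤ 0 := by
      intro x
      have h2 : m x * W x ≤ 0 := hMle x
      by_contra hpos
      push_neg at hpos
      nlinarith [hmpos x]
    have hWneg : ∀ x, W x < 0 := by
      intro x0
      rcases lt_or_eq_of_le (hWle x0) with h | h
      · exact h
      · exfalso
        have hM0 : M x0 = 0 := by show m x0 * W x0 = 0; rw [h, mul_zero]
        have hzero : ∀ t ≤ x0, M t = 0 :=
          fun t ht => le_antisymm (hMle t) (hM0 ▸ hManti ht)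
        have hfb0 : ∀ t, t < x0 → f_b t = 0 := by
          intro t ht
          have heq : M =ᶠ[𝓝 t] fun _ => 0 :=
            eventually_of_mem (Iio_mem_nhds ht) (fun s hs => hzero s (le_of_lt hs))
          have h0 : HasDerivAt M 0 t :=
            (hasDerivAt_const t 0).congr_of_eventuallyEq heq
          have huniq := h0.unique (hMd t)
          rcases mul_eq_zero.1 huniq.symm with hcon | hgood
          · exfalso
            have : 0 < 2/σ^2 * m t * F t * Real.exp t := hcoef t
            nlinarith
          · exact hgood
        have h1 := hfb0 (x0-1) (by linarith)
        have h2 := hfb0 (x0-2) (by linarith)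
        have := hone _ _ h1 h2
        linarith
    have hsA : StrictAnti (fun x => (Real.exp x + c_b) / F x) := by
      apply strictAnti_of_deriv_neg
      intro x
      rw [hderivA]
      exact div_neg_of_neg_of_pos (hWneg x) (pow_pos (hFpos x) 2)
    refine ⟨?_, fun _ => hsA⟩
    intro x hx
    exact le_trans hBA (le_of_lt (hsA hx))
  · -- case (b)
    obtain ⟨x1, x2, a, h12, hr1, hr2, haI, hWa0, hAa⟩ := htwo
    have hWa : W a = 0 := by
      have hd : deriv F a = F1 a := by rw [hderivF]
      show Real.exp a * F a - (Real.exp a + c_b) * F1 a = 0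
      rw [← hd]
      linear_combination hWa0
    have hfbd1 : ∀ x, HasDerivAt f_b (-μ + r*c_b*Real.exp (-x)) x := by
      intro x
      have hfbE : f_b = fun x => (μ * θ + σ ^ 2 / 2 - r) - μ * x - r * c_b * Real.exp (-x) :=
        funext hfb
      rw [hfbE]
      have h1 : HasDerivAt (fun x : ℝ => Real.exp (-x)) (-Real.exp (-x)) x := by
        simpa [Function.comp_def] using (Real.hasDerivAt_exp (-x)).comp x ((hasDerivAt_id x).neg)
      have h := ((hasDerivAt_const x (μ * θ + σ ^ 2 / 2 - r)).sub
        ((hasDerivAt_id x).const_mul μ)).sub (h1.const_mul (r*c_b))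
      refine h.congr_deriv ?_
      ring
    have hderivfb : deriv f_b = fun x => -μ + r*c_b*Real.exp (-x) :=
      funext fun x => (hfbd1 x).deriv
    have hfbd2 : ∀ x, HasDerivAt (deriv f_b) (-(r*c_b*Real.exp (-x))) x := by
      intro x
      rw [hderivfb]
      have h1 : HasDerivAt (fun x : ℝ => Real.exp (-x)) (-Real.exp (-x)) x := by
        simpa [Function.comp_def] using (Real.hasDerivAt_exp (-x)).comp x ((hasDerivAt_id x).neg)
      have h := (hasDerivAt_const x (-μ)).add (h1.const_mul (r*c_b))
      refine h.congr_deriv ?_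
      ring
    have hconc : StrictConcaveOn ℝ univ f_b := by
      apply strictConcaveOn_of_deriv2_neg' convex_univ
        (fun x _ => ((hfbd1 x).differentiableAt.continuousAt.continuousWithinAt))
      intro x _
      have h2 : deriv^[2] f_b x = deriv (deriv f_b) x := by
        rfl
      rw [h2, (hfbd2 x).deriv]
      have := Real.exp_pos (-x)
      nlinarith [mul_pos (mul_pos hr hcb) this]
    obtain ⟨hs1, hs2, hs3⟩ := stmt17_sign hconc h12 hr1 hr2
    have hMa : M a = 0 := by show m a * W a = 0; rw [hWa, mul_zero]
    have hMantiIic : AntitoneOn M (Iic x1) := by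
      apply antitoneOn_of_deriv_nonpos (convex_Iic x1) (hMdiff.continuous.continuousOn)
        (hMdiff.differentiableOn)
      intro t ht
      rw [interior_Iic] at ht
      rw [hderivM]
      exact mul_nonpos_of_nonneg_of_nonpos (hcoef t).le (le_of_lt (hs1 t ht))
    have hMantiIci : AntitoneOn M (Ici x2) := by
      apply antitoneOn_of_deriv_nonpos (convex_Ici x2) (hMdiff.continuous.continuousOn)
        (hMdiff.differentiableOn)
      intro t ht
      rw [interior_Ici] at ht
      rw [hderivM]
      exact mul_nonpos_of_nonneg_of_nonpos (hcoef t).le (le_of_lt (hs3 t ht))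
    have hMmono : StrictMonoOn M (Icc x1 x2) := by
      apply strictMonoOn_of_deriv_pos (convex_Icc x1 x2) (hMdiff.continuous.continuousOn)
      intro t ht
      rw [interior_Icc] at ht
      rw [hderivM]
      exact mul_pos (hcoef t) (hs2 t ht)
    have hMleIic : ∀ x ≤ x1, M x ≤ 0 := by
      intro x hx
      apply ge_of_tendsto hMlim
      filter_upwards [eventually_le_atBot x] with t ht
      exact hMantiIic (show t ∈ Iic x1 from le_trans ht hx) (show x ∈ Iic x1 from hx) ht
    have haIcc : a ∈ Icc x1 x2 := ⟨haI.1.le, haI.2.le⟩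
    have hMle_a : ∀ x ≤ a, M x ≤ 0 := by
      intro x hx
      rcases le_or_gt x x1 with h | h
      · exact hMleIic x h
      · rcases eq_or_lt_of_le hx with heq | hlt
        · rw [heq]; exact le_of_eq hMa
        · have : M x < M a := hMmono ⟨h.le, le_trans hx haI.2.le⟩ haIcc hlt
          linarith [hMa, this]
    have hWle_a : ∀ x ≤ a, W x ≤ 0 := by
      intro x hx
      have h2 : m x * W x ≤ 0 := hMle_a x hx
      by_contra hpos
      push_neg at hpos
      nlinarith [hmpos x]
    have hkey : ∀ s, a < s → M s < 0 → ∀ t, s ≤ t → M t < 0 := by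
      intro s hsgt hMs t hts
      have hsx2 : x2 < s := by
        by_contra hcon2
        push_neg at hcon2
        have : M a < M s := hMmono haIcc ⟨le_trans haI.1.le hsgt.le, hcon2⟩ hsgt
        rw [hMa] at this
        linarith
      exact lt_of_le_of_lt (hMantiIci (show s ∈ Ici x2 from hsx2.le)
        (show t ∈ Ici x2 from le_trans hsx2.le hts) hts) hMs
    constructor
    · intro x hx
      rcases le_or_gt x a with hxa | hax
      · have h1 : (Real.exp a + c_b)/F a ≤ (Real.exp x + c_b)/F x :=
          hAanti x a hxa (fun u hu => hWle_a u hu.2.le)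
        linarith [hAa]
      · by_cases hall : ∀ u ∈ Ioo a x, 0 ≤ W u
        · have h1 := hAmono a x hax.le hall
          linarith [hAa]
        · push_neg at hall
          obtain ⟨sp, hsI, hWs⟩ := hall
          have hMs : M sp < 0 := mul_neg_of_pos_of_neg (hmpos sp) hWs
          have hWneg2 : ∀ u ∈ Ioo x bstar, W u ≤ 0 := by
            intro u hu
            have h2 : m u * W u < 0 := hkey sp hsI.1 hMs u (le_trans hsI.2.le hu.1.le)
            by_contra hpos
            push_neg at hpos
            nlinarith [hmpos u]
          have h1 := hAanti x bstar hx.le hWneg2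
          linarith [hBA]
    · intro hone
      exact absurd (hone x1 x2 hr1 hr2) (ne_of_lt h12)
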